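/- Let M be a totally disconnected locally compact abelian group and α a contracting automorphism of M (αⁿ(x) → 0 for all x, uniformly on compacta). Then the map x ↦ α(x) − x is a topological group automorphism of M. -/

import Mathlib

open Filter Topology Set

/-- van Dantzig: in a locally compact totally disconnected topological abelian group,
every neighborhood of `0` contains a compact open subgroup. -/
theorem myVanDantzig {M : Type*} [AddCommGroup M] [TopologicalSpace M] [IsTopologicalAddGroup M]
    [LocallyCompactSpace M] [TotallyDisconnectedSpace M] {U : Set M} (hU : U ∈ 𝓝 (0 : M)) :
    ∃ V : AddSubgroup M, IsCompact (V : Set M) ∧ IsOpen (V : Set M) ∧ (V : Set M) ⊆ U := by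
  haveI : T2Space M := IsTopologicalAddGroup.t2Space_iff_zero_closed.mpr isClosed_singleton
  obtain ⟨K, hKc, hK⟩ := exists_compact_mem_nhds (0 : M)
  have hO : interior K ∩ interior U ∈ 𝓝 (0 : M) :=
    inter_mem (interior_mem_nhds.mpr hK) (interior_mem_nhds.mpr hU)
  obtain ⟨C, hCclopen, hC0, hCsub⟩ :=
    (loc_compact_Haus_tot_disc_of_zero_dim (H := M)).mem_nhds_iff.mp hO
  have hCK : C ⊆ K := fun x hx => interior_subset (hCsub hx).1
  have hCU : C ⊆ U := fun x hx => interior_subset (hCsub hx).2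
  have hCc : IsCompact C := hKc.of_isClosed_subset hCclopen.1 hCK
  have hCopen : IsOpen C := hCclopen.2
  obtain ⟨V₀, hV₀, hV₀C⟩ := compact_open_separated_add_left hCc hCopen Subset.rfl
  set W : Set M := V₀ ∩ ((fun x : M => -x) ⁻¹' V₀) ∩ C with hWdef
  have hWnhds : W ∈ 𝓝 (0 : M) := by
    refine inter_mem (inter_mem hV₀ ?_) (hCopen.mem_nhds hC0)
    have : Filter.Tendsto (fun x : M => -x) (𝓝 0) (𝓝 (0 : M)) := by
      simpa using (continuous_neg (G := M)).tendsto (0 : M)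
    exact this hV₀
  set G : AddSubgroup M := AddSubgroup.closure W with hGdef
  have hWG : W ⊆ (G : Set M) := AddSubgroup.subset_closure
  have hGopen : IsOpen (G : Set M) :=
    AddSubgroup.isOpen_of_mem_nhds G (Filter.mem_of_superset hWnhds hWG)
  -- every element of the closure translates C into itself (and so does its negative)
  have key : ∀ x ∈ G, (∀ c ∈ C, x + c ∈ C) ∧ (∀ c ∈ C, -x + c ∈ C) := by
    intro x hx
    induction hx using AddSubgroup.closure_induction with
    | mem g hg =>
      obtain ⟨⟨hg1, hg2⟩, _⟩ := hg
      constructor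
      · intro c hc; exact hV₀C (Set.add_mem_add hg1 hc)
      · intro c hc; exact hV₀C (Set.add_mem_add hg2 hc)
    | zero => simp
    | add a b ha hb iha ihb =>
      constructor
      · intro c hc
        have : a + (b + c) ∈ C := iha.1 _ (ihb.1 _ hc)
        simpa [add_assoc] using this
      · intro c hc
        have : -b + (-a + c) ∈ C := ihb.2 _ (iha.2 _ hc)
        simpa [neg_add, add_assoc] using this
    | neg a ha iha =>
      refine ⟨fun c hc => iha.2 _ hc, fun c hc => by simpa using iha.1 _ hc⟩
  have hGC : (G : Set M) ⊆ C := by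
    intro x hx
    have := (key x hx).1 0 hC0
    simpa using this
  have hGclosed : IsClosed (G : Set M) := AddSubgroup.isClosed_of_isOpen G hGopen
  exact ⟨G, hCc.of_isClosed_subset hGclosed hGC, hGopen, hGC.trans hCU⟩

/-- if `M` is a totally disconnected locally compact abelian group and `α`
a contracting topological automorphism of `M` (iterates tend to `0` uniformly on compact
sets), then `x ↦ α(x) − x` is a topological group automorphism of `M`. -/
theorem stmt5 {M : Type*} [AddCommGroup M] [TopologicalSpace M] [IsTopologicalAddGroup M]
    [LocallyCompactSpace M] [TotallyDisconnectedSpace M]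
    (α : M ≃+ M) (hc : Continuous α) (hc' : Continuous α.symm)
    (hcontr : ∀ K : Set M, IsCompact K → ∀ U ∈ 𝓝 (0 : M),
      ∀ᶠ n : ℕ in atTop, ∀ x ∈ K, (⇑α)^[n] x ∈ U) :
    ∃ β : M ≃+ M, Continuous β ∧ Continuous β.symm ∧ ∀ x : M, β x = α x - x := by
  classical
  haveI : T2Space M := IsTopologicalAddGroup.t2Space_iff_zero_closed.mpr isClosed_singleton
  letI : UniformSpace M := IsTopologicalAddGroup.rightUniformSpace M
  haveI : IsUniformAddGroup M := isUniformAddGroup_of_addCommGroup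
  -- basic facts about iterates of α
  have hiter_add : ∀ (n : ℕ) (x y : M), (⇑α)^[n] (x + y) = (⇑α)^[n] x + (⇑α)^[n] y := by
    intro n
    induction n with
    | zero => intro x y; simp
    | succ n ih =>
      intro x y
      rw [Function.iterate_succ_apply', Function.iterate_succ_apply',
        Function.iterate_succ_apply', ih, map_add]
  have hiter_zero : ∀ n : ℕ, (⇑α)^[n] (0 : M) = 0 := by
    intro n
    induction n with
    | zero => rfl
    | succ n ih => rw [Function.iterate_succ_apply', ih, map_zero]
  have hiter_sub : ∀ (n : ℕ) (x y : M), (⇑α)^[n] (x - y) = (⇑α)^[n] x - (⇑α)^[n] y := by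
    intro n
    induction n with
    | zero => intro x y; simp
    | succ n ih =>
      intro x y
      rw [Function.iterate_succ_apply', Function.iterate_succ_apply',
        Function.iterate_succ_apply', ih, map_sub]
  have hiter_cont : ∀ n : ℕ, Continuous ((⇑α)^[n]) := fun n => hc.iterate n
  -- partial sums
  set S : M → ℕ → M := fun y n => ∑ i ∈ Finset.range n, (⇑α)^[i] y with hSdef
  -- pointwise contraction
  have hpt : ∀ (y : M), ∀ U ∈ 𝓝 (0 : M), ∃ N, ∀ n ≥ N, (⇑α)^[n] y ∈ U := by
    intro y U hU
    obtain ⟨N, hN⟩ := eventually_atTop.mp (hcontr {y} isCompact_singleton U hU)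
    exact ⟨N, fun n hn => hN n hn y rfl⟩
  have tendsto_pt : ∀ y : M, Tendsto (fun n => (⇑α)^[n] y) atTop (𝓝 (0 : M)) := by
    intro y
    intro s hs
    obtain ⟨N, hN⟩ := hpt y s hs
    exact mem_atTop_sets.mpr ⟨N, fun n hn => hN n hn⟩
  -- partial sums over Ico intervals lie in subgroups containing the tail
  have hIco : ∀ (y : M) (k l : ℕ), k ≤ l → S y l - S y k = ∑ i ∈ Finset.Ico k l, (⇑α)^[i] y := by
    intro y k l hkl
    rw [Finset.sum_Ico_eq_sub _ hkl]
  -- Cauchy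
  have hcauchy : ∀ y : M, CauchySeq (S y) := by
    intro y
    rw [cauchySeq_iff]
    intro Vent hVent
    rw [uniformity_eq_comap_nhds_zero M] at hVent
    obtain ⟨U, hU, hUsub⟩ := Filter.mem_comap.mp hVent
    obtain ⟨G, _, hGopen, hGU⟩ := myVanDantzig hU
    obtain ⟨N, hN⟩ := hpt y _ (hGopen.mem_nhds G.zero_mem)
    refine ⟨N, fun k hk l hl => hUsub ?_⟩
    have hmem : S y l - S y k ∈ G := by
      rcases le_total k l with h | h
      · rw [hIco y k l h]
        exact AddSubgroup.sum_mem _ fun i hi => hN i (le_trans hk (Finset.mem_Ico.mp hi).1)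
      · have : S y k - S y l ∈ G := by
          rw [hIco y l k h]
          exact AddSubgroup.sum_mem _ fun i hi => hN i (le_trans hl (Finset.mem_Ico.mp hi).1)
        simpa using G.neg_mem this
    exact hGU hmem
  -- convergence
  have hconv : ∀ y : M, ∃ a : M, Tendsto (S y) atTop (𝓝 a) := by
    intro y
    obtain ⟨G, hGc, hGopen, _⟩ := myVanDantzig (univ_mem : (univ : Set M) ∈ 𝓝 (0 : M))
    obtain ⟨N, hN⟩ := hpt y _ (hGopen.mem_nhds G.zero_mem)
    have hKc : IsCompact ((fun z : M => S y N + z) '' (G : Set M)) :=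
      hGc.image (continuous_add_left _)
    have hmem : ∀ n, S y (n + N) ∈ (fun z : M => S y N + z) '' (G : Set M) := by
      intro n
      refine ⟨S y (n + N) - S y N, ?_, by simp⟩
      rw [hIco y N (n + N) (Nat.le_add_left N n)]
      exact AddSubgroup.sum_mem _ fun i hi => hN i (Finset.mem_Ico.mp hi).1
    have hshift : CauchySeq fun n => S y (n + N) :=
      (hcauchy y).comp_tendsto (tendsto_add_atTop_nat N)
    obtain ⟨a, _, ha⟩ := cauchySeq_tendsto_of_isComplete hKc.isComplete hmem hshift
    exact ⟨a, (tendsto_add_atTop_iff_nat N).mp ha⟩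
  choose g hg using hconv
  -- algebraic properties of g
  have hg0 : g 0 = 0 := by
    refine tendsto_nhds_unique (hg 0) ?_
    have : S 0 = fun _ : ℕ => (0 : M) := by
      funext n; simp [hSdef, hiter_zero]
    rw [this]
    exact tendsto_const_nhds
  have hgadd : ∀ x y : M, g (x + y) = g x + g y := by
    intro x y
    refine tendsto_nhds_unique (hg (x + y)) ?_
    have : S (x + y) = fun n => S x n + S y n := by
      funext n; simp [hSdef, hiter_add, Finset.sum_add_distrib]
    rw [this]
    exact (hg x).add (hg y)
  -- key identity 1 : α (g y) = g y - y
  have hkey1 : ∀ y : M, α (g y) = g y - y := by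
    intro y
    have hα : Tendsto (fun n => α (S y n)) atTop (𝓝 (α (g y))) :=
      (hc.tendsto _).comp (hg y)
    have heq : (fun n => α (S y n)) = fun n => S y (n + 1) - y := by
      funext n
      have h1 : α (S y n) = ∑ i ∈ Finset.range n, (⇑α)^[i + 1] y := by
        rw [hSdef]
        rw [map_sum]
        exact Finset.sum_congr rfl fun i _ => (Function.iterate_succ_apply' (⇑α) i y).symm
      have h2 : S y (n + 1) = (∑ i ∈ Finset.range n, (⇑α)^[i + 1] y) + y := by
        rw [hSdef]
        simpa using Finset.sum_range_succ' (fun i => (⇑α)^[i] y) n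
      rw [h1, h2]
      abel
    rw [heq] at hα
    have hα' : Tendsto (fun n => S y (n + 1) - y) atTop (𝓝 (g y - y)) :=
      ((hg y).comp (tendsto_add_atTop_nat 1)).sub_const y
    exact tendsto_nhds_unique hα hα'
  -- key identity 2 : g (α x - x) = -x
  have hkey2 : ∀ x : M, g (α x - x) = -x := by
    intro x
    refine tendsto_nhds_unique (hg (α x - x)) ?_
    have heq : S (α x - x) = fun n => (⇑α)^[n] x - x := by
      funext n
      rw [hSdef]
      have : ∀ i : ℕ, (⇑α)^[i] (α x - x) = (⇑α)^[i + 1] x - (⇑α)^[i] x := by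
        intro i
        rw [hiter_sub, Function.iterate_succ_apply]
      calc (∑ i ∈ Finset.range n, (⇑α)^[i] (α x - x))
          = ∑ i ∈ Finset.range n, ((⇑α)^[i + 1] x - (⇑α)^[i] x) :=
            Finset.sum_congr rfl fun i _ => this i
        _ = (⇑α)^[n] x - (⇑α)^[0] x := Finset.sum_range_sub (fun i => (⇑α)^[i] x) n
        _ = (⇑α)^[n] x - x := by simp
    rw [heq]
    have : Tendsto (fun n => (⇑α)^[n] x - x) atTop (𝓝 (0 - x)) :=
      (tendsto_pt x).sub_const x
    simpa using this
  -- continuity of g at 0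
  have hg_cont0 : Tendsto g (𝓝 (0 : M)) (𝓝 (0 : M)) := by
    rw [Filter.tendsto_def]
    intro U hU
    obtain ⟨G, hGc, hGopen, hGU⟩ := myVanDantzig hU
    have hGclosed : IsClosed (G : Set M) := AddSubgroup.isClosed_of_isOpen G hGopen
    obtain ⟨K₀, hK₀c, hK₀⟩ := exists_compact_mem_nhds (0 : M)
    obtain ⟨N, hN⟩ :=
      eventually_atTop.mp (hcontr K₀ hK₀c _ (hGopen.mem_nhds G.zero_mem))
    have hW : (K₀ ∩ ⋂ i ∈ Finset.range N, (⇑α)^[i] ⁻¹' (G : Set M)) ∈ 𝓝 (0 : M) := by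
      refine inter_mem hK₀ ?_
      rw [Filter.biInter_finset_mem]
      intro i _
      have hcont : Tendsto ((⇑α)^[i]) (𝓝 (0 : M)) (𝓝 (0 : M)) := by
        have := (hiter_cont i).tendsto (0 : M)
        rwa [hiter_zero i] at this
      exact hcont (hGopen.mem_nhds G.zero_mem)
    refine Filter.mem_of_superset hW ?_
    intro y hy
    show g y ∈ U
    have hally : ∀ n : ℕ, (⇑α)^[n] y ∈ G := by
      intro n
      rcases lt_or_ge n N with h | h
      · have := hy.2
        simp only [Set.mem_iInter] at this
        exact this n (Finset.mem_range.mpr h)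
      · exact hN n h y hy.1
    have hSmem : ∀ n : ℕ, S y n ∈ G := fun n =>
      AddSubgroup.sum_mem _ fun i _ => hally i
    have : g y ∈ (G : Set M) :=
      hGclosed.mem_of_tendsto (hg y) (Filter.Eventually.of_forall hSmem)
    exact hGU this
  -- g as a continuous additive homomorphism
  have hg_cont : Continuous g := by
    have : ContinuousAt (⟨⟨g, hg0⟩, hgadd⟩ : M →+ M) 0 := by
      show ContinuousAt g 0
      unfold ContinuousAt
      rwa [hg0]
    exact continuous_of_continuousAt_zero (⟨⟨g, hg0⟩, hgadd⟩ : M →+ M) this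
  -- the automorphism
  refine ⟨{ toFun := fun x => α x - x
            invFun := fun y => -(g y)
            left_inv := ?_
            right_inv := ?_
            map_add' := ?_ }, ?_, ?_, fun x => rfl⟩
  · intro x
    show -g (α x - x) = x
    rw [hkey2 x, neg_neg]
  · intro y
    show α (-g y) - -g y = y
    rw [map_neg α (g y), hkey1 y]
    abel
  · intro x y
    show α (x + y) - (x + y) = (α x - x) + (α y - y)
    rw [map_add]
    abel
  · show Continuous fun x => α x - x
    exact hc.sub continuous_id
  · show Continuous fun y => -(g y)
    exact hg_cont.neg
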